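/- Let q ≥ 1 and Δ ≥ 3 be integers and let B be a symmetric q×q real matrix with nonnegative entries that is primitive, i.e., there is a positive integer k such that every entry of B^k is positive. Let D = {(r,c) ∈ ℝ^q × ℝ^q : all entries of r and c are nonnegative and rᵀBc > 0}, and let Φ(r,c) = Δ·ln(rᵀBc) − (Δ−1)·( ln(∑_i r_i^{Δ/(Δ−1)}) + ln(∑_j c_j^{Δ/(Δ−1)}) ) on D. If (r,c) ∈ D is a local maximum of Φ relative to D, then r_i > 0 for every i and c_j > 0 for every j. -/

import Mathlib

open Matrix

lemma exists_pos_of_sum_pos {n : ℕ} (f : Fin n → ℝ) (h : 0 < ∑ i, f i) : ∃ i, 0 < f i := by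
  by_contra h'
  push_neg at h'
  have := Finset.sum_nonpos (s := Finset.univ) (fun i _ => h' i)
  linarith

lemma sum_update_aux {n : ℕ} (i : Fin n) (f : Fin n → ℝ → ℝ) (r : Fin n → ℝ) (ε : ℝ)
    (h0 : f i (r i) = 0) :
    ∑ k, f k (Function.update r i ε k) = f i ε + ∑ k, f k (r k) := by
  have h : (fun k => f k (Function.update r i ε k))
      = Function.update (fun k => f k (r k)) i (f i ε) := by
    funext k
    by_cases hk : k = i
    · subst hk; simp
    · simp [Function.update_of_ne hk]
  rw [h, Finset.sum_update_of_mem (Finset.mem_univ i)]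
  rw [Finset.sum_eq_sum_sdiff_singleton_add (Finset.mem_univ i) (fun k => f k (r k)), h0,
    add_zero]

lemma key_ineq (Δ : ℕ) (hΔ : 3 ≤ Δ) (S a N : ℝ) (hS : 0 < S) (ha : 0 < a) (hN : 0 < N) :
    ∀ᶠ ε in nhdsWithin (0:ℝ) (Set.Ioi 0),
      (Δ:ℝ) * Real.log S - ((Δ:ℝ)-1) * Real.log N
        < (Δ:ℝ) * Real.log (S + ε * a)
            - ((Δ:ℝ)-1) * Real.log (N + ε ^ ((Δ:ℝ)/((Δ:ℝ)-1))) := by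
  have hΔ3 : (3:ℝ) ≤ (Δ:ℝ) := by exact_mod_cast hΔ
  have hΔ1 : (0:ℝ) < (Δ:ℝ) - 1 := by linarith
  set p : ℝ := (Δ:ℝ)/((Δ:ℝ)-1) with hp
  set K : ℝ := (Δ:ℝ) * a * N / (2 * S * ((Δ:ℝ) - 1)) with hK
  have hKpos : 0 < K := by
    apply div_pos
    · positivity
    · positivity
  set δ : ℝ := min (S / a) (K ^ (Δ - 1)) with hδ
  have hδpos : 0 < δ := lt_min (div_pos hS ha) (pow_pos hKpos _)
  filter_upwards [Ioo_mem_nhdsGT_of_mem (show (0:ℝ) ∈ Set.Ico 0 δ from ⟨le_refl _, hδpos⟩)]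
    with ε hε
  obtain ⟨hε0, hεδ⟩ := hε
  have hεS : ε ≤ S / a := le_of_lt (lt_of_lt_of_le hεδ (min_le_left _ _))
  have hεK : ε < K ^ (Δ - 1) := lt_of_lt_of_le hεδ (min_le_right _ _)
  -- t := ε ^ (p - 1) < K
  have hcast : ((Δ - 1 : ℕ) : ℝ) = (Δ:ℝ) - 1 := by
    have : 1 ≤ Δ := by omega
    push_cast [this]; ring
  have hpm1 : p - 1 = 1 / ((Δ:ℝ) - 1) := by
    rw [hp]; field_simp; ring
  set t : ℝ := ε ^ (p - 1) with ht
  have htpos : 0 < t := Real.rpow_pos_of_pos hε0 _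
  have htK : t < K := by
    by_contra hcon
    push_neg at hcon
    have h1 : K ^ (Δ - 1) ≤ t ^ (Δ - 1) := pow_le_pow_left₀ (le_of_lt hKpos) hcon _
    have h2 : t ^ (Δ - 1) = ε := by
      rw [ht, ← Real.rpow_natCast (ε ^ (p-1)) (Δ - 1), ← Real.rpow_mul (le_of_lt hε0), hcast,
        hpm1]
      rw [show 1 / ((Δ:ℝ) - 1) * ((Δ:ℝ) - 1) = 1 by field_simp]
      exact Real.rpow_one ε
    rw [h2] at h1
    linarith
  have hEp : ε ^ p = ε * t := by
    have h1 : ε ^ (1:ℝ) * ε ^ (p-1) = ε ^ (1 + (p-1)) := (Real.rpow_add hε0 1 (p-1)).symm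
    rw [Real.rpow_one] at h1
    rw [ht, h1]
    congr 1
    ring
  have hx : 0 < ε * a := mul_pos hε0 ha
  have hxS : ε * a ≤ S := by
    rw [← le_div_iff₀ ha] at *
    exact hεS
  have hE : 0 < ε ^ p := Real.rpow_pos_of_pos hε0 _
  -- log bounds
  have hlog1 : ε * a / (S + ε * a) ≤ Real.log (S + ε * a) - Real.log S := by
    have h := Real.log_le_sub_one_of_pos (show 0 < S / (S + ε * a) by positivity)
    rw [Real.log_div (ne_of_gt hS) (by positivity)] at h
    have : S / (S + ε * a) - 1 = -(ε * a / (S + ε * a)) := by field_simp; ring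
    linarith [this ▸ h]
  have hlog2 : Real.log (N + ε ^ p) - Real.log N ≤ ε ^ p / N := by
    have h := Real.log_le_sub_one_of_pos (show 0 < (N + ε ^ p) / N by positivity)
    rw [Real.log_div (by positivity) (ne_of_gt hN)] at h
    have : (N + ε ^ p) / N - 1 = ε ^ p / N := by field_simp; ring
    linarith [this ▸ h]
  have hcore : ((Δ:ℝ)-1) * (ε ^ p / N) < (Δ:ℝ) * (ε * a / (S + ε * a)) := by
    rw [show ((Δ:ℝ)-1) * (ε ^ p / N) = (((Δ:ℝ)-1) * ε ^ p) / N by ring,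
      show (Δ:ℝ) * (ε * a / (S + ε * a)) = ((Δ:ℝ) * (ε * a)) / (S + ε * a) by ring,
      div_lt_div_iff₀ hN (by positivity)]
    rw [hEp]
    have e1 : ((Δ:ℝ)-1) * (ε*t) * (S + ε*a) ≤ ((Δ:ℝ)-1) * (ε*t) * (2*S) := by
      nlinarith [mul_le_mul_of_nonneg_left hxS (show (0:ℝ) ≤ ((Δ:ℝ)-1)*(ε*t) by positivity)]
    have e2 : ((Δ:ℝ)-1) * (ε*t) * (2*S) < ((Δ:ℝ)-1) * (ε*K) * (2*S) := by
      nlinarith [mul_lt_mul_of_pos_left htK (show (0:ℝ) < ((Δ:ℝ)-1)*ε*(2*S) by positivity)]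
    have e3 : ((Δ:ℝ)-1) * (ε*K) * (2*S) = (Δ:ℝ) * (ε*a) * N := by
      rw [hK]; field_simp
    calc ((Δ:ℝ)-1) * (ε*t) * (S + ε*a) ≤ ((Δ:ℝ)-1) * (ε*t) * (2*S) := e1
      _ < ((Δ:ℝ)-1) * (ε*K) * (2*S) := e2
      _ = (Δ:ℝ) * (ε*a) * N := e3
  have hΔpos : (0:ℝ) ≤ (Δ:ℝ) := by positivity
  have g1 := mul_le_mul_of_nonneg_left hlog1 hΔpos
  have g2 := mul_le_mul_of_nonneg_left hlog2 (le_of_lt hΔ1)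
  rw [mul_sub] at g1 g2
  linarith [hcore]

lemma no_zero_coord (q Δ : ℕ) (hΔ : 3 ≤ Δ)
    (B : Matrix (Fin q) (Fin q) ℝ) (hBnonneg : ∀ i j, 0 ≤ B i j)
    (r c : Fin q → ℝ) (hr : ∀ i, 0 ≤ r i) (hc : ∀ j, 0 ≤ c j)
    (hS : 0 < ∑ i, ∑ j, r i * B i j * c j)
    (hmax : IsLocalMaxOn
        (fun p : (Fin q → ℝ) × (Fin q → ℝ) =>
          (Δ : ℝ) * Real.log (∑ i, ∑ j, p.1 i * B i j * p.2 j)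
            - ((Δ : ℝ) - 1) *
              (Real.log (∑ i, p.1 i ^ ((Δ : ℝ) / ((Δ : ℝ) - 1)))
                + Real.log (∑ j, p.2 j ^ ((Δ : ℝ) / ((Δ : ℝ) - 1)))))
        {p : (Fin q → ℝ) × (Fin q → ℝ) |
          (∀ i, 0 ≤ p.1 i) ∧ (∀ j, 0 ≤ p.2 j) ∧ 0 < ∑ i, ∑ j, p.1 i * B i j * p.2 j}
        (r, c))
    (i : Fin q) (hri : r i = 0) : ∑ j, B i j * c j = 0 := by
  by_contra hcon
  set p : ℝ := (Δ : ℝ) / ((Δ : ℝ) - 1) with hpdef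
  have hΔ3 : (3:ℝ) ≤ (Δ:ℝ) := by exact_mod_cast hΔ
  have hppos : 0 < p := by
    apply div_pos <;> linarith
  set W : Fin q → ℝ := fun k => ∑ j, B k j * c j with hW
  have hWnonneg : ∀ k, 0 ≤ W k :=
    fun k => Finset.sum_nonneg fun j _ => mul_nonneg (hBnonneg k j) (hc j)
  have ha : 0 < W i := lt_of_le_of_ne (hWnonneg i) (Ne.symm hcon)
  set a : ℝ := W i
  set S : ℝ := ∑ i, ∑ j, r i * B i j * c j with hSdef
  set N : ℝ := ∑ k, r k ^ p with hNdef
  set M : ℝ := ∑ j, c j ^ p with hMdef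
  -- N > 0
  have hrpos : ∃ k, 0 < r k := by
    obtain ⟨k, hk⟩ := exists_pos_of_sum_pos _ hS
    obtain ⟨j, hj⟩ := exists_pos_of_sum_pos _ hk
    refine ⟨k, ?_⟩
    by_contra h
    have : r k = 0 := le_antisymm (not_lt.mp h) (hr k)
    simp [this] at hj
  have hN : 0 < N := by
    obtain ⟨k, hk⟩ := hrpos
    refine Finset.sum_pos' (fun m _ => Real.rpow_nonneg (hr m) p) ⟨k, Finset.mem_univ k, ?_⟩
    exact Real.rpow_pos_of_pos hk p
  -- the double-sum and power-sum along the perturbation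
  have hWsum : ∀ (u : Fin q → ℝ), ∑ k, ∑ j, u k * B k j * c j = ∑ k, u k * W k := by
    intro u
    refine Finset.sum_congr rfl fun k _ => ?_
    rw [hW, Finset.mul_sum]
    exact Finset.sum_congr rfl fun j _ => by ring
  have eq1 : ∀ ε : ℝ, ∑ k, ∑ j, (Function.update r i ε) k * B k j * c j = S + ε * a := by
    intro ε
    rw [hWsum]
    rw [sum_update_aux i (fun k t => t * W k) r ε (by rw [hri]; ring)]
    rw [hSdef, hWsum]
    ring
  have eq2 : ∀ ε : ℝ, ∑ k, (Function.update r i ε) k ^ p = N + ε ^ p := by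
    intro ε
    rw [sum_update_aux i (fun _ t => t ^ p) r ε (by rw [hri]; exact Real.zero_rpow (ne_of_gt hppos))]
    rw [hNdef]; ring
  -- the path
  set γ : ℝ → (Fin q → ℝ) × (Fin q → ℝ) := fun ε => (Function.update r i ε, c) with hγ
  have hγ0 : γ 0 = (r, c) := by
    rw [hγ]
    simp only [Prod.mk.injEq, and_true]
    funext k
    by_cases hk : k = i
    · subst hk; simp [hri]
    · simp [Function.update_of_ne hk]
  have hmemD : ∀ ε : ℝ, 0 < ε → γ ε ∈
      {p : (Fin q → ℝ) × (Fin q → ℝ) |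
        (∀ i, 0 ≤ p.1 i) ∧ (∀ j, 0 ≤ p.2 j) ∧ 0 < ∑ i, ∑ j, p.1 i * B i j * p.2 j} := by
    intro ε hε
    refine ⟨fun k => ?_, hc, ?_⟩
    · by_cases hk : k = i
      · subst hk; simp [hγ, le_of_lt hε]
      · simp [hγ, Function.update_of_ne hk]; exact hr k
    · show 0 < ∑ k, ∑ j, (Function.update r i ε) k * B k j * c j
      rw [eq1]
      have : 0 < ε * a := mul_pos hε ha
      linarith
  have hcontγ : Continuous γ := by
    apply Continuous.prodMk
    · apply continuous_pi
      intro k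
      by_cases hk : k = i
      · subst hk; simpa using continuous_id'
      · simp only [Function.update_of_ne hk]; exact continuous_const
    · exact continuous_const
  have htend : Filter.Tendsto γ (nhdsWithin 0 (Set.Ioi 0))
      (nhdsWithin (r, c) {p : (Fin q → ℝ) × (Fin q → ℝ) |
        (∀ i, 0 ≤ p.1 i) ∧ (∀ j, 0 ≤ p.2 j) ∧ 0 < ∑ i, ∑ j, p.1 i * B i j * p.2 j}) := by
    rw [tendsto_nhdsWithin_iff]
    constructor
    · have := hcontγ.tendsto 0
      rw [hγ0] at this
      exact this.mono_left nhdsWithin_le_nhds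
    · filter_upwards [self_mem_nhdsWithin] with ε (hε : ε ∈ Set.Ioi 0)
      exact hmemD ε hε
  have hup : ∀ᶠ ε in nhdsWithin (0:ℝ) (Set.Ioi 0),
      (fun p : (Fin q → ℝ) × (Fin q → ℝ) =>
          (Δ : ℝ) * Real.log (∑ i, ∑ j, p.1 i * B i j * p.2 j)
            - ((Δ : ℝ) - 1) *
              (Real.log (∑ i, p.1 i ^ ((Δ : ℝ) / ((Δ : ℝ) - 1)))
                + Real.log (∑ j, p.2 j ^ ((Δ : ℝ) / ((Δ : ℝ) - 1))))) (γ ε)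
        ≤ (Δ : ℝ) * Real.log (∑ i, ∑ j, r i * B i j * c j)
            - ((Δ : ℝ) - 1) *
              (Real.log (∑ i, r i ^ ((Δ : ℝ) / ((Δ : ℝ) - 1)))
                + Real.log (∑ j, c j ^ ((Δ : ℝ) / ((Δ : ℝ) - 1)))) := htend.eventually hmax
  have hkey := key_ineq Δ hΔ S a N hS ha hN
  obtain ⟨ε, hlt, hle⟩ := (hkey.and hup).exists
  simp only [hγ] at hle
  rw [eq1 ε, eq2 ε] at hle
  rw [← hpdef] at hle
  rw [← hSdef, ← hNdef, ← hMdef] at hle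
  linarith

/-- for a primitive symmetric nonnegative interaction matrix, any
local maximum of Φ relative to the domain D = {(r,c) : r,c ≥ 0, rᵀBc > 0}
has all coordinates strictly positive. -/
theorem Phi_local_max_interior
    (q Δ : ℕ) (hq : 1 ≤ q) (hΔ : 3 ≤ Δ)
    (B : Matrix (Fin q) (Fin q) ℝ) (hBsymm : B.IsSymm)
    (hBnonneg : ∀ i j, 0 ≤ B i j)
    (hprim : ∃ k : ℕ, 0 < k ∧ ∀ i j, 0 < (B ^ k) i j)
    (r c : Fin q → ℝ)
    (hmem : (r, c) ∈ {p : (Fin q → ℝ) × (Fin q → ℝ) |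
        (∀ i, 0 ≤ p.1 i) ∧ (∀ j, 0 ≤ p.2 j) ∧ 0 < ∑ i, ∑ j, p.1 i * B i j * p.2 j})
    (hmax : IsLocalMaxOn
        (fun p : (Fin q → ℝ) × (Fin q → ℝ) =>
          (Δ : ℝ) * Real.log (∑ i, ∑ j, p.1 i * B i j * p.2 j)
            - ((Δ : ℝ) - 1) *
              (Real.log (∑ i, p.1 i ^ ((Δ : ℝ) / ((Δ : ℝ) - 1)))
                + Real.log (∑ j, p.2 j ^ ((Δ : ℝ) / ((Δ : ℝ) - 1)))))
        {p : (Fin q → ℝ) × (Fin q → ℝ) |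
          (∀ i, 0 ≤ p.1 i) ∧ (∀ j, 0 ≤ p.2 j) ∧ 0 < ∑ i, ∑ j, p.1 i * B i j * p.2 j}
        (r, c)) :
    (∀ i, 0 < r i) ∧ ∀ j, 0 < c j := by
  obtain ⟨hr, hc, hS⟩ := hmem
  simp only at hr hc hS
  have hBsym : ∀ i j, B j i = B i j := fun i j => hBsymm.apply i j
  -- symmetry of the pairing
  have heq : ∀ (u v : Fin q → ℝ),
      ∑ i, ∑ j, u i * B i j * v j = ∑ i, ∑ j, v i * B i j * u j := by
    intro u v
    rw [Finset.sum_comm]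
    exact Finset.sum_congr rfl fun j _ => Finset.sum_congr rfl fun i _ => by
      rw [hBsym j i]; ring
  set D := {p : (Fin q → ℝ) × (Fin q → ℝ) |
      (∀ i, 0 ≤ p.1 i) ∧ (∀ j, 0 ≤ p.2 j) ∧ 0 < ∑ i, ∑ j, p.1 i * B i j * p.2 j} with hD
  -- swapped local max
  have hmapsTo : Set.MapsTo Prod.swap D D := by
    intro x hx
    obtain ⟨h1, h2, h3⟩ := hx
    refine ⟨h2, h1, ?_⟩
    show 0 < ∑ i, ∑ j, x.2 i * B i j * x.1 j
    rw [heq]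
    exact h3
  have htendswap : Filter.Tendsto Prod.swap (nhdsWithin (c, r) D) (nhdsWithin (r, c) D) := by
    have := (continuous_swap.continuousWithinAt
      (s := D) (x := ((c, r) : (Fin q → ℝ) × (Fin q → ℝ)))).tendsto_nhdsWithin hmapsTo
    simpa using this
  have hmax' : IsLocalMaxOn
      (fun p : (Fin q → ℝ) × (Fin q → ℝ) =>
          (Δ : ℝ) * Real.log (∑ i, ∑ j, p.1 i * B i j * p.2 j)
            - ((Δ : ℝ) - 1) *
              (Real.log (∑ i, p.1 i ^ ((Δ : ℝ) / ((Δ : ℝ) - 1)))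
                + Real.log (∑ j, p.2 j ^ ((Δ : ℝ) / ((Δ : ℝ) - 1)))))
      D (c, r) := by
    have h1 : ∀ᶠ x in nhdsWithin (c, r) D,
        (fun p : (Fin q → ℝ) × (Fin q → ℝ) =>
          (Δ : ℝ) * Real.log (∑ i, ∑ j, p.1 i * B i j * p.2 j)
            - ((Δ : ℝ) - 1) *
              (Real.log (∑ i, p.1 i ^ ((Δ : ℝ) / ((Δ : ℝ) - 1)))
                + Real.log (∑ j, p.2 j ^ ((Δ : ℝ) / ((Δ : ℝ) - 1))))) (Prod.swap x)
        ≤ (fun p : (Fin q → ℝ) × (Fin q → ℝ) =>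
          (Δ : ℝ) * Real.log (∑ i, ∑ j, p.1 i * B i j * p.2 j)
            - ((Δ : ℝ) - 1) *
              (Real.log (∑ i, p.1 i ^ ((Δ : ℝ) / ((Δ : ℝ) - 1)))
                + Real.log (∑ j, p.2 j ^ ((Δ : ℝ) / ((Δ : ℝ) - 1))))) (r, c) :=
      htendswap.eventually hmax
    refine h1.mono fun x hx => ?_
    simp only [Prod.fst_swap, Prod.snd_swap] at hx
    simp only at hx ⊢
    rw [heq x.2 x.1] at hx
    rw [heq r c] at hx
    linarith
  have hS' : 0 < ∑ i, ∑ j, c i * B i j * r j := by rw [heq]; exact hS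
  -- the two vanishing-row facts
  have hArow : ∀ i, r i = 0 → ∑ j, B i j * c j = 0 :=
    fun i hi => no_zero_coord q Δ hΔ B hBnonneg r c hr hc hS hmax i hi
  have hBrow : ∀ j, c j = 0 → ∑ i, B j i * r i = 0 :=
    fun j hj => no_zero_coord q Δ hΔ B hBnonneg c r hc hr hS' hmax' j hj
  -- pointwise versions
  have hA : ∀ i j, r i = 0 → 0 < c j → B i j = 0 := by
    intro i j hi hj
    have h0 := hArow i hi
    have hterm : B i j * c j = 0 := by
      have := (Finset.sum_eq_zero_iff_of_nonneg
        (fun m (_ : m ∈ Finset.univ) => mul_nonneg (hBnonneg i m) (hc m))).mp h0 j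
        (Finset.mem_univ j)
      exact this
    rcases mul_eq_zero.mp hterm with h | h
    · exact h
    · exact absurd h (ne_of_gt hj)
  have hB : ∀ i j, c j = 0 → 0 < r i → B i j = 0 := by
    intro i j hj hi
    have h0 := hBrow j hj
    have hterm : B j i * r i = 0 := by
      exact (Finset.sum_eq_zero_iff_of_nonneg
        (fun m (_ : m ∈ Finset.univ) => mul_nonneg (hBnonneg j m) (hr m))).mp h0 i
        (Finset.mem_univ i)
    rcases mul_eq_zero.mp hterm with h | h
    · rw [hBsym j i]; exact h
    · exact absurd h (ne_of_gt hi)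
  -- nonnegativity of powers
  have hpow : ∀ n : ℕ, ∀ i j, 0 ≤ (B ^ n) i j := by
    intro n
    induction n with
    | zero => intro i j; simp [Matrix.one_apply]; split <;> norm_num
    | succ n ih =>
      intro i j
      rw [pow_succ, Matrix.mul_apply]
      exact Finset.sum_nonneg fun m _ => mul_nonneg (ih i m) (hBnonneg m j)
  -- a positive term of the double sum
  obtain ⟨i0, hi0⟩ := exists_pos_of_sum_pos _ hS
  obtain ⟨j0, hj0⟩ := exists_pos_of_sum_pos _ hi0
  have hri0 : 0 < r i0 := by
    by_contra h
    have : r i0 = 0 := le_antisymm (not_lt.mp h) (hr i0)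
    simp [this] at hj0
  have hcj0 : 0 < c j0 := by
    by_contra h
    have : c j0 = 0 := le_antisymm (not_lt.mp h) (hc j0)
    simp [this] at hj0
  obtain ⟨k, hkpos, hk⟩ := hprim
  by_cases hST : ∃ x, 0 < r x ∧ 0 < c x
  · obtain ⟨x0, hx0r, hx0c⟩ := hST
    have closure : ∀ n, ∀ b, 0 < (B ^ n) x0 b → 0 < r b ∧ 0 < c b := by
      intro n
      induction n with
      | zero =>
        intro b hb
        rw [pow_zero, Matrix.one_apply] at hb
        split at hb
        · next h => exact h ▸ ⟨hx0r, hx0c⟩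
        · exact absurd hb (lt_irrefl 0)
      | succ n ih =>
        intro b hb
        rw [pow_succ, Matrix.mul_apply] at hb
        obtain ⟨m, hm⟩ := exists_pos_of_sum_pos _ hb
        have h1 : 0 < (B ^ n) x0 m := by
          by_contra h
          have : (B ^ n) x0 m = 0 := le_antisymm (not_lt.mp h) (hpow n x0 m)
          simp [this] at hm
        have h2 : 0 < B m b := by
          by_contra h
          have : B m b = 0 := le_antisymm (not_lt.mp h) (hBnonneg m b)
          simp [this] at hm
        obtain ⟨hrm, hcm⟩ := ih m h1
        constructor
        · by_contra h
          have hb0 : r b = 0 := le_antisymm (not_lt.mp h) (hr b)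
          have := hA b m hb0 hcm
          rw [hBsym b m] at h2
          exact absurd this (ne_of_gt h2)
        · by_contra h
          have hb0 : c b = 0 := le_antisymm (not_lt.mp h) (hc b)
          have := hB m b hb0 hrm
          exact absurd this (ne_of_gt h2)
    exact ⟨fun i => (closure k i (hk x0 i)).1, fun j => (closure k j (hk x0 j)).2⟩
  · exfalso
    push_neg at hST
    have parity : ∀ n, ∀ b,
        (Even n → 0 < (B ^ n) i0 b → 0 < r b) ∧ (¬ Even n → 0 < (B ^ n) i0 b → 0 < c b) := by
      intro n
      induction n with
      | zero =>
        intro b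
        constructor
        · intro _ hb
          rw [pow_zero, Matrix.one_apply] at hb
          split at hb
          · next h => exact h ▸ hri0
          · exact absurd hb (lt_irrefl 0)
        · intro h _
          exact absurd Even.zero h
      | succ n ih =>
        intro b
        have hpar : Even (n + 1) ↔ ¬ Even n := Nat.even_add_one
        constructor
        · intro hev hb
          rw [pow_succ, Matrix.mul_apply] at hb
          obtain ⟨m, hm⟩ := exists_pos_of_sum_pos _ hb
          have h1 : 0 < (B ^ n) i0 m := by
            by_contra h
            have : (B ^ n) i0 m = 0 := le_antisymm (not_lt.mp h) (hpow n i0 m)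
            simp [this] at hm
          have h2 : 0 < B m b := by
            by_contra h
            have : B m b = 0 := le_antisymm (not_lt.mp h) (hBnonneg m b)
            simp [this] at hm
          have hcm : 0 < c m := (ih m).2 (hpar.mp hev) h1
          by_contra h
          have hb0 : r b = 0 := le_antisymm (not_lt.mp h) (hr b)
          have := hA b m hb0 hcm
          rw [hBsym b m] at h2
          exact absurd this (ne_of_gt h2)
        · intro hodd hb
          rw [pow_succ, Matrix.mul_apply] at hb
          obtain ⟨m, hm⟩ := exists_pos_of_sum_pos _ hb
          have h1 : 0 < (B ^ n) i0 m := by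
            by_contra h
            have : (B ^ n) i0 m = 0 := le_antisymm (not_lt.mp h) (hpow n i0 m)
            simp [this] at hm
          have h2 : 0 < B m b := by
            by_contra h
            have : B m b = 0 := le_antisymm (not_lt.mp h) (hBnonneg m b)
            simp [this] at hm
          have hev : Even n := by
            by_contra h
            exact hodd (hpar.mpr h)
          have hrm : 0 < r m := (ih m).1 hev h1
          by_contra h
          have hb0 : c b = 0 := le_antisymm (not_lt.mp h) (hc b)
          have := hB m b hb0 hrm
          exact absurd this (ne_of_gt h2)
    rcases Nat.even_or_odd k with hev | hodd
    · have := (parity k j0).1 hev (hk i0 j0)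
      exact absurd hcj0 (not_lt.mpr (hST j0 this))
    · have := (parity k i0).2 (Nat.not_even_iff_odd.mpr hodd) (hk i0 i0)
      exact absurd this (not_lt.mpr (hST i0 hri0))
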